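/- Gaussian integral of the probit link: ∫ ψ(x) N(x | μ, σ²) dx = ψ(μ / √(1 + σ²)), where ψ is the CDF of the standard normal distribution and N(x|μ,σ²) is the Gaussian density with mean μ and variance σ². -/

import Mathlib

open MeasureTheory Real
open scoped NNReal

/-- Gaussian density with mean `μ` and variance `v`. -/
noncomputable def gpdf (μ v x : ℝ) : ℝ :=
  (Real.sqrt (2 * Real.pi * v))⁻¹ * Real.exp (-(x - μ) ^ 2 / (2 * v))

/-- Standard normal CDF. -/
noncomputable def stdCDF (t : ℝ) : ℝ := ∫ s in Set.Iic t, gpdf 0 1 s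

lemma gpdf_nnreal (m : ℝ) (v : ℝ≥0) : gpdf m v = ProbabilityTheory.gaussianPDFReal m v := rfl

lemma integrable_gpdf (m : ℝ) {v : ℝ} (hv : 0 < v) : Integrable (gpdf m v) := by
  lift v to ℝ≥0 using hv.le
  rw [gpdf_nnreal]
  exact ProbabilityTheory.integrable_gaussianPDFReal _ _

lemma integral_gpdf (m : ℝ) {v : ℝ} (hv : 0 < v) : ∫ x, gpdf m v x = 1 := by
  lift v to ℝ≥0 using hv.le
  rw [gpdf_nnreal]
  exact ProbabilityTheory.integral_gaussianPDFReal_eq_one m (by exact_mod_cast hv.ne')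

lemma gpdf_nonneg (m v x : ℝ) : 0 ≤ gpdf m v x := by
  unfold gpdf; positivity

lemma gpdf_neg (m v t : ℝ) : gpdf m v (-t) = gpdf (-m) v t := by
  unfold gpdf
  rw [show (-t - m) ^ 2 = (t - -m) ^ 2 by ring]

lemma gpdf_comm (t x : ℝ) : gpdf (-t) 1 x = gpdf (-x) 1 t := by
  unfold gpdf
  rw [show (x - -t) ^ 2 = (t - -x) ^ 2 by ring]

lemma gpdf_le_one (m x : ℝ) : gpdf m 1 x ≤ 1 := by
  unfold gpdf
  have h1 : Real.exp (-(x - m) ^ 2 / (2 * 1)) ≤ 1 := by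
    rw [Real.exp_le_one_iff]
    have : (0:ℝ) ≤ (x - m) ^ 2 := sq_nonneg _
    nlinarith
  have h2 : (Real.sqrt (2 * Real.pi * 1))⁻¹ ≤ 1 := by
    rw [mul_one]
    rw [inv_le_one_iff₀]
    right
    rw [show (1:ℝ) = Real.sqrt 1 by simp]
    exact Real.sqrt_le_sqrt (by nlinarith [Real.pi_gt_three])
  calc (Real.sqrt (2 * Real.pi * 1))⁻¹ * Real.exp (-(x - m) ^ 2 / (2 * 1))
      ≤ 1 * 1 := by
        apply mul_le_mul h2 h1 (Real.exp_nonneg _) zero_le_one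
    _ = 1 := by ring

lemma gpdf_mul (u m x : ℝ) {σ2 : ℝ} (hσ : 0 < σ2) :
    gpdf u 1 x * gpdf m σ2 x
      = gpdf m (1 + σ2) u * gpdf ((u * σ2 + m) / (1 + σ2)) (σ2 / (1 + σ2)) x := by
  have h1 : (0:ℝ) < 1 + σ2 := by linarith
  have hne : σ2 ≠ 0 := hσ.ne'
  have h1ne : (1:ℝ) + σ2 ≠ 0 := h1.ne'
  unfold gpdf
  rw [mul_mul_mul_comm, mul_mul_mul_comm ((Real.sqrt (2 * Real.pi * (1 + σ2)))⁻¹)]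
  congr 1
  · rw [← mul_inv, ← mul_inv, ← Real.sqrt_mul (by positivity), ← Real.sqrt_mul (by positivity)]
    congr 1
    field_simp
  · rw [← Real.exp_add, ← Real.exp_add]
    congr 1
    field_simp
    ring

lemma gpdf_scale {v : ℝ} (hv : 0 < v) (m y : ℝ) :
    gpdf m v y = (Real.sqrt v)⁻¹ * gpdf 0 1 ((Real.sqrt v)⁻¹ * y + -(m / Real.sqrt v)) := by
  have hs : 0 < Real.sqrt v := Real.sqrt_pos.mpr hv
  have hsq : Real.sqrt v ^ 2 = v := Real.sq_sqrt hv.le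
  unfold gpdf
  rw [← mul_assoc]
  congr 1
  · rw [← mul_inv]
    congr 1
    rw [show 2 * Real.pi * v = v * (2 * Real.pi * 1) by ring, Real.sqrt_mul hv.le]
  · congr 1
    rw [← hsq, Real.sqrt_sq hs.le]
    field_simp
    ring

lemma integral_Ioi_comp_add (f : ℝ → ℝ) (a d : ℝ) :
    ∫ x in Set.Ioi a, f (x + d) = ∫ x in Set.Ioi (a + d), f x := by
  have h : MeasurePreserving (fun x : ℝ => x + d) volume volume :=
    measurePreserving_add_right volume d
  have he : MeasurableEmbedding (fun x : ℝ => x + d) :=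
    (MeasurableEquiv.addRight d).measurableEmbedding
  have := h.setIntegral_preimage_emb he f (Set.Ioi (a + d))
  rwa [Set.preimage_add_const_Ioi, add_sub_cancel_right] at this

lemma integral_Iic_comp_add (f : ℝ → ℝ) (a d : ℝ) :
    ∫ x in Set.Iic a, f (x + d) = ∫ x in Set.Iic (a + d), f x := by
  have h : MeasurePreserving (fun x : ℝ => x + d) volume volume :=
    measurePreserving_add_right volume d
  have he : MeasurableEmbedding (fun x : ℝ => x + d) :=
    (MeasurableEquiv.addRight d).measurableEmbedding
  have := h.setIntegral_preimage_emb he f (Set.Iic (a + d))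
  rwa [Set.preimage_add_const_Iic, add_sub_cancel_right] at this

lemma stdCDF_eq_Ioi (d : ℝ) : stdCDF d = ∫ y in Set.Ioi (-d), gpdf 0 1 y := by
  unfold stdCDF
  rw [show (∫ s in Set.Iic d, gpdf 0 1 s) = ∫ s in Set.Iic d, (fun y => gpdf 0 1 y) (-s) by
    simp only [gpdf_neg, neg_zero]]
  exact integral_comp_neg_Iic d _

lemma setIntegral_gpdf_Iic (m : ℝ) {v : ℝ} (hv : 0 < v) (c : ℝ) :
    ∫ t in Set.Iic c, gpdf m v t = stdCDF ((c - m) / Real.sqrt v) := by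
  have hs : 0 < Real.sqrt v := Real.sqrt_pos.mpr hv
  calc ∫ t in Set.Iic c, gpdf m v t
      = ∫ t in Set.Iic c, (fun y => gpdf (-m) v y) (-t) := by
        simp only [gpdf_neg, neg_neg]
    _ = ∫ y in Set.Ioi (-c), gpdf (-m) v y := integral_comp_neg_Iic c _
    _ = ∫ y in Set.Ioi (-c),
          (Real.sqrt v)⁻¹ * (fun z => gpdf 0 1 (z + -(-m / Real.sqrt v)))
            ((Real.sqrt v)⁻¹ * y) := by
        simp only
        exact setIntegral_congr_fun measurableSet_Ioi fun y _ => gpdf_scale hv (-m) y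
    _ = (Real.sqrt v)⁻¹ * ∫ y in Set.Ioi (-c),
          (fun z => gpdf 0 1 (z + -(-m / Real.sqrt v))) ((Real.sqrt v)⁻¹ * y) :=
        integral_const_mul _ _
    _ = (Real.sqrt v)⁻¹ * (((Real.sqrt v)⁻¹)⁻¹ •
          ∫ z in Set.Ioi ((Real.sqrt v)⁻¹ * (-c)), gpdf 0 1 (z + -(-m / Real.sqrt v))) := by
        congr 1
        exact integral_comp_mul_left_Ioi (fun z => gpdf 0 1 (z + -(-m / Real.sqrt v))) (-c)
          (inv_pos.mpr hs)
    _ = ∫ z in Set.Ioi ((Real.sqrt v)⁻¹ * (-c)), gpdf 0 1 (z + -(-m / Real.sqrt v)) := by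
        rw [inv_inv, smul_eq_mul, ← mul_assoc, inv_mul_cancel₀ hs.ne', one_mul]
    _ = ∫ w in Set.Ioi ((Real.sqrt v)⁻¹ * (-c) + -(-m / Real.sqrt v)), gpdf 0 1 w :=
        integral_Ioi_comp_add _ _ _
    _ = stdCDF ((c - m) / Real.sqrt v) := by
        rw [stdCDF_eq_Ioi]
        congr 1
        ring

lemma integral_gpdf_mul (u m : ℝ) {σ2 : ℝ} (hσ : 0 < σ2) :
    ∫ x, gpdf u 1 x * gpdf m σ2 x = gpdf m (1 + σ2) u := by
  have h1 : (0:ℝ) < 1 + σ2 := by linarith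
  simp_rw [gpdf_mul u m _ hσ]
  rw [integral_const_mul, integral_gpdf _ (by positivity), mul_one]

lemma stdCDF_eq (x : ℝ) : stdCDF x = ∫ t in Set.Iic 0, gpdf (-t) 1 x := by
  unfold stdCDF
  rw [show (∫ s in Set.Iic x, gpdf 0 1 s) = ∫ s in Set.Iic (0 + x), gpdf 0 1 s by rw [zero_add],
    ← integral_Iic_comp_add (gpdf 0 1) 0 x]
  refine setIntegral_congr_fun measurableSet_Iic fun t _ => ?_
  unfold gpdf
  rw [show (t + x - 0) ^ 2 = (x - -t) ^ 2 by ring]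

lemma measurable_gpdf (m v : ℝ) : Measurable (gpdf m v) := by
  unfold gpdf; fun_prop

lemma measurable_gpdf_pair (m σ2 : ℝ) :
    Measurable (fun p : ℝ × ℝ => gpdf (-p.2) 1 p.1 * gpdf m σ2 p.1) := by
  unfold gpdf
  fun_prop

/-- `∫ ψ(x) N(x|μ,σ²) dx = ψ(μ/√(1+σ²))`. -/
theorem stmt2 (μ σ2 : ℝ) (hσ : 0 < σ2) :
    ∫ x, stdCDF x * gpdf μ σ2 x = stdCDF (μ / Real.sqrt (1 + σ2)) := by
  have h1 : (0:ℝ) < 1 + σ2 := by linarith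
  have hint : Integrable (Function.uncurry fun x t => gpdf (-t) 1 x * gpdf μ σ2 x)
      ((volume : Measure ℝ).prod ((volume : Measure ℝ).restrict (Set.Iic 0))) := by
    have hmeas : AEStronglyMeasurable (Function.uncurry fun x t => gpdf (-t) 1 x * gpdf μ σ2 x)
        ((volume : Measure ℝ).prod ((volume : Measure ℝ).restrict (Set.Iic 0))) :=
      (measurable_gpdf_pair μ σ2).aestronglyMeasurable
    rw [integrable_prod_iff' hmeas]
    constructor
    · refine Filter.Eventually.of_forall fun t => ?_
      exact (integrable_gpdf μ hσ).bdd_mul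
        (measurable_gpdf (-t) 1).aestronglyMeasurable
        (Filter.Eventually.of_forall fun x => by
          rw [Real.norm_eq_abs, abs_of_nonneg (gpdf_nonneg _ _ _)]
          exact gpdf_le_one _ _)
    · refine ((integrable_gpdf (-μ) h1).restrict (s := Set.Iic 0)).congr ?_
      refine Filter.Eventually.of_forall fun t => ?_
      have : ∫ x, ‖gpdf (-t) 1 x * gpdf μ σ2 x‖ = ∫ x, gpdf (-t) 1 x * gpdf μ σ2 x := by
        refine integral_congr_ae (Filter.Eventually.of_forall fun x => ?_)
        exact Real.norm_of_nonneg (mul_nonneg (gpdf_nonneg _ _ _) (gpdf_nonneg _ _ _))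
      simp only [Function.uncurry]
      rw [this, integral_gpdf_mul _ _ hσ, gpdf_neg]
  calc ∫ x, stdCDF x * gpdf μ σ2 x
      = ∫ x, ∫ t in Set.Iic 0, gpdf (-t) 1 x * gpdf μ σ2 x := by
        simp_rw [stdCDF_eq, ← integral_mul_const]
    _ = ∫ t in Set.Iic 0, ∫ x, gpdf (-t) 1 x * gpdf μ σ2 x :=
        integral_integral_swap hint
    _ = ∫ t in Set.Iic 0, gpdf (-μ) (1 + σ2) t := by
        refine setIntegral_congr_fun measurableSet_Iic fun t _ => ?_
        rw [integral_gpdf_mul _ _ hσ, gpdf_neg]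
    _ = stdCDF ((0 - -μ) / Real.sqrt (1 + σ2)) := setIntegral_gpdf_Iic _ h1 _
    _ = stdCDF (μ / Real.sqrt (1 + σ2)) := by rw [zero_sub, neg_neg]
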